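/- Let f : {1,…,N} → ℝ₊ solve the ODE system ρ(ε_i) (d f_i/dt) = Q_i(f(t)) with ρ(ε_i) > 0 and f_i(t) > 0 for all t, where Q is the discrete boson collision operator. Then the discrete entropy S(t) = w Σ_{i=1}^N ρ(ε_i) [(1+f_i) ln(1+f_i) − f_i ln f_i] is nondecreasing in t. -/

import Mathlib

open Finset

private lemma entropy_prod_nonneg (a b : ℝ) (ha : 0 < a) (hb : 0 < b) :
    0 ≤ (a - b) * (Real.log a - Real.log b) := by
  rcases le_total a b with h | h
  · have h1 : a - b ≤ 0 := by linarith
    have h2 : Real.log a - Real.log b ≤ 0 :=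
      sub_nonpos.2 (Real.log_le_log ha h)
    nlinarith [mul_nonneg (neg_nonneg.2 h1) (neg_nonneg.2 h2)]
  · have h1 : 0 ≤ a - b := by linarith
    have h2 : 0 ≤ Real.log a - Real.log b :=
      sub_nonneg.2 (Real.log_le_log hb h)
    exact mul_nonneg h1 h2

private lemma key_ineq (N : ℕ) (ρ : ℕ → ℝ) (hρ : ∀ i, 0 ≤ ρ i)
    (g : ℕ → ℝ) (hg : ∀ i ∈ Icc 1 N, 0 < g i) :
    0 ≤ ∑ i ∈ Icc 1 N, (Real.log (1 + g i) - Real.log (g i)) *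
      (∑ j ∈ Icc 1 N, ∑ l ∈ Icc 1 N, ∑ k ∈ Icc 1 N,
        if i + j = k + l then
          ρ (min (min i j) (min k l)) *
            (g k * g l * (1 + g i) * (1 + g j) -
              g i * g j * (1 + g k) * (1 + g l))
        else 0) := by
  set s := Icc 1 N with hs
  set φ : ℕ → ℝ := fun i => Real.log (1 + g i) - Real.log (g i) with hφ
  set W : ℕ → ℕ → ℕ → ℕ → ℝ := fun i j k l =>
    if i + j = k + l then ρ (min (min i j) (min k l)) *
      (g k * g l * (1 + g i) * (1 + g j) - g i * g j * (1 + g k) * (1 + g l))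
    else 0 with hW
  -- symmetry facts
  have symW1 : ∀ i j k l, W j i l k = W i j k l := by
    intro i j k l
    simp only [hW, add_comm j i, add_comm l k, min_comm j i, min_comm l k]
    split_ifs with h
    · ring
    · rfl
  have symW2 : ∀ i j k l, W k l i j = -W i j k l := by
    intro i j k l
    simp only [hW]
    by_cases h : i + j = k + l
    · rw [if_pos h.symm, if_pos h, min_comm (min i j) (min k l)]
      ring
    · rw [if_neg (fun hh => h hh.symm), if_neg h, neg_zero]
  -- rewrite as a sum over quadruples (i, j, l, k)
  have hrw : ∑ i ∈ s, φ i * (∑ j ∈ s, ∑ l ∈ s, ∑ k ∈ s, W i j k l)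
      = ∑ p ∈ s ×ˢ s ×ˢ s ×ˢ s, φ p.1 * W p.1 p.2.1 p.2.2.2 p.2.2.1 := by
    simp only [Finset.sum_product, Finset.mul_sum]
  set P := s ×ˢ s ×ˢ s ×ˢ s with hP
  have memP : ∀ p : ℕ × ℕ × ℕ × ℕ, p ∈ P ↔
      p.1 ∈ s ∧ p.2.1 ∈ s ∧ p.2.2.1 ∈ s ∧ p.2.2.2 ∈ s := by
    intro p; simp [hP, Finset.mem_product]
  set S4 : ℝ := ∑ p ∈ P, φ p.1 * W p.1 p.2.1 p.2.2.2 p.2.2.1 with hS4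
  -- S4 equals the sum with weight φ_j
  have h1 : S4 = ∑ p ∈ P, φ p.2.1 * W p.1 p.2.1 p.2.2.2 p.2.2.1 := by
    apply Finset.sum_nbij' (fun p : ℕ × ℕ × ℕ × ℕ => (p.2.1, p.1, p.2.2.2, p.2.2.1))
      (fun p : ℕ × ℕ × ℕ × ℕ => (p.2.1, p.1, p.2.2.2, p.2.2.1))
    · intro p hp; rw [memP] at hp ⊢; tauto
    · intro p hp; rw [memP] at hp ⊢; tauto
    · intro p _; rfl
    · intro p _; rfl
    · intro p _
      simp only
      rw [symW1 p.1 p.2.1 p.2.2.2 p.2.2.1]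
  -- S4 equals minus the sum with weight φ_k
  have h2 : S4 = -∑ p ∈ P, φ p.2.2.2 * W p.1 p.2.1 p.2.2.2 p.2.2.1 := by
    rw [← Finset.sum_neg_distrib]
    apply Finset.sum_nbij' (fun p : ℕ × ℕ × ℕ × ℕ => (p.2.2.2, p.2.2.1, p.2.1, p.1))
      (fun p : ℕ × ℕ × ℕ × ℕ => (p.2.2.2, p.2.2.1, p.2.1, p.1))
    · intro p hp; rw [memP] at hp ⊢; tauto
    · intro p hp; rw [memP] at hp ⊢; tauto
    · intro p _; rfl
    · intro p _; rfl
    · intro p _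
      simp only
      rw [symW2 p.2.2.2 p.2.2.1 p.1 p.2.1, symW2 p.1 p.2.1 p.2.2.2 p.2.2.1]
      ring
  -- S4 equals minus the sum with weight φ_l
  have h3 : S4 = -∑ p ∈ P, φ p.2.2.1 * W p.1 p.2.1 p.2.2.2 p.2.2.1 := by
    rw [← Finset.sum_neg_distrib]
    apply Finset.sum_nbij' (fun p : ℕ × ℕ × ℕ × ℕ => (p.2.2.1, p.2.2.2, p.1, p.2.1))
      (fun p : ℕ × ℕ × ℕ × ℕ => (p.2.2.1, p.2.2.2, p.1, p.2.1))
    · intro p hp; rw [memP] at hp ⊢; tauto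
    · intro p hp; rw [memP] at hp ⊢; tauto
    · intro p _; rfl
    · intro p _; rfl
    · intro p _
      simp only
      rw [symW1 p.2.2.2 p.2.2.1 p.1 p.2.1, symW2 p.1 p.2.1 p.2.2.2 p.2.2.1]
      ring
  -- pointwise nonnegativity of the symmetrized summand
  have hpt : ∀ p ∈ P, 0 ≤ (φ p.1 + φ p.2.1 - φ p.2.2.2 - φ p.2.2.1) *
      W p.1 p.2.1 p.2.2.2 p.2.2.1 := by
    intro p hp
    rw [memP] at hp
    obtain ⟨hi, hj, hl, hk⟩ := hp
    obtain ⟨i, j, l, k⟩ := p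
    simp only at hi hj hl hk ⊢
    have hgi := hg i hi; have hgj := hg j hj; have hgk := hg k hk; have hgl := hg l hl
    have h1i : (0:ℝ) < 1 + g i := by linarith
    have h1j : (0:ℝ) < 1 + g j := by linarith
    have h1k : (0:ℝ) < 1 + g k := by linarith
    have h1l : (0:ℝ) < 1 + g l := by linarith
    simp only [hW]
    split_ifs with h
    · set A : ℝ := g k * g l * (1 + g i) * (1 + g j) with hA
      set B : ℝ := g i * g j * (1 + g k) * (1 + g l) with hB
      have hApos : 0 < A := by positivity
      have hBpos : 0 < B := by positivity
      have hlogA : Real.log A = Real.log (g k) + Real.log (g l) +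
          Real.log (1 + g i) + Real.log (1 + g j) := by
        rw [hA, Real.log_mul (by positivity) (ne_of_gt h1j),
          Real.log_mul (by positivity) (ne_of_gt h1i),
          Real.log_mul (ne_of_gt hgk) (ne_of_gt hgl)]
      have hlogB : Real.log B = Real.log (g i) + Real.log (g j) +
          Real.log (1 + g k) + Real.log (1 + g l) := by
        rw [hB, Real.log_mul (by positivity) (ne_of_gt h1l),
          Real.log_mul (by positivity) (ne_of_gt h1k),
          Real.log_mul (ne_of_gt hgi) (ne_of_gt hgj)]
      have hφeq : φ i + φ j - φ k - φ l = Real.log A - Real.log B := by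
        simp only [hφ]; rw [hlogA, hlogB]; ring
      rw [hφeq]
      have := entropy_prod_nonneg A B hApos hBpos
      have hρnn := hρ (min (min i j) (min k l))
      nlinarith [this, hρnn, mul_nonneg hρnn ((sub_nonneg).2 (le_refl A))]
    · simp
  have hsum4 : 4 * S4 = ∑ p ∈ P, (φ p.1 + φ p.2.1 - φ p.2.2.2 - φ p.2.2.1) *
      W p.1 p.2.1 p.2.2.2 p.2.2.1 := by
    have hsplit : ∑ p ∈ P, (φ p.1 + φ p.2.1 - φ p.2.2.2 - φ p.2.2.1) *
        W p.1 p.2.1 p.2.2.2 p.2.2.1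
        = (∑ p ∈ P, φ p.1 * W p.1 p.2.1 p.2.2.2 p.2.2.1)
          + (∑ p ∈ P, φ p.2.1 * W p.1 p.2.1 p.2.2.2 p.2.2.1)
          - (∑ p ∈ P, φ p.2.2.2 * W p.1 p.2.1 p.2.2.2 p.2.2.1)
          - (∑ p ∈ P, φ p.2.2.1 * W p.1 p.2.1 p.2.2.2 p.2.2.1) := by
      rw [← Finset.sum_add_distrib, ← Finset.sum_sub_distrib, ← Finset.sum_sub_distrib]
      apply Finset.sum_congr rfl
      intro p _; ring
    rw [hsplit]
    linarith [h1, h2, h3]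
  have hS4nn : 0 ≤ S4 := by
    have := Finset.sum_nonneg hpt
    linarith [hsum4 ▸ this]
  calc (0:ℝ) ≤ S4 := hS4nn
    _ = _ := hrw.symm

/-- Entropy growth for the semidiscrete scheme: if `f` solves
`ρ(ε_i) dfᵢ/dt = Qᵢ(f(t))` with `ρ(ε_i) > 0` and `fᵢ(t) > 0`, then the discrete
entropy `S(t) = w Σᵢ ρ(ε_i) [(1+fᵢ)ln(1+fᵢ) − fᵢ ln fᵢ]` is nondecreasing. -/
theorem discrete_entropy_nondecreasing (N : ℕ) (w : ℝ) (hw : 0 < w)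
    (ρ : ℕ → ℝ) (hρ : ∀ i, 0 ≤ ρ i) (hρpos : ∀ i ∈ Icc 1 N, 0 < ρ i)
    (Q : (ℕ → ℝ) → ℕ → ℝ)
    (hQ : ∀ (g : ℕ → ℝ) (i : ℕ), Q g i =
      w ^ 2 * ∑ j ∈ Icc 1 N, ∑ l ∈ Icc 1 N, ∑ k ∈ Icc 1 N,
        if i + j = k + l then
          ρ (min (min i j) (min k l)) *
            (g k * g l * (1 + g i) * (1 + g j) -
              g i * g j * (1 + g k) * (1 + g l))
        else 0)
    (f : ℝ → ℕ → ℝ) (hfpos : ∀ t, ∀ i ∈ Icc 1 N, 0 < f t i)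
    (hode : ∀ t : ℝ, ∀ i ∈ Icc 1 N,
      HasDerivAt (fun s => f s i) (Q (f t) i / ρ i) t) :
    Monotone (fun t => w * ∑ i ∈ Icc 1 N,
      ρ i * ((1 + f t i) * Real.log (1 + f t i) - f t i * Real.log (f t i))) := by
  -- derivative of each entropy term
  have hterm : ∀ t : ℝ, ∀ i ∈ Icc 1 N,
      HasDerivAt (fun u => ρ i * ((1 + f u i) * Real.log (1 + f u i)
        - f u i * Real.log (f u i)))
        ((Real.log (1 + f t i) - Real.log (f t i)) * Q (f t) i) t := by
    intro t i hi
    have hfi := hfpos t i hi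
    have h1f : (0:ℝ) < 1 + f t i := by linarith
    have hd := hode t i hi
    have hx1 : HasDerivAt (fun x : ℝ => (1 + x) * Real.log (1 + x))
        (Real.log (1 + f t i) + 1) (f t i) := by
      have ha : HasDerivAt (fun x : ℝ => 1 + x) 1 (f t i) := by
        simpa using (hasDerivAt_id (f t i)).const_add 1
      have hb : HasDerivAt Real.log (1 + f t i)⁻¹ (1 + f t i) :=
        Real.hasDerivAt_log (ne_of_gt h1f)
      have : HasDerivAt (fun x : ℝ => (1 + x) * Real.log (1 + x))
          (1 * Real.log (1 + f t i) + (1 + f t i) * ((1 + f t i)⁻¹ * 1)) (f t i) :=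
        ha.mul (hb.comp (f t i) ha)
      convert this using 1
      field_simp
    have hx2 : HasDerivAt (fun x : ℝ => x * Real.log x)
        (Real.log (f t i) + 1) (f t i) :=
      Real.hasDerivAt_mul_log (ne_of_gt hfi)
    have d1 : HasDerivAt (fun u => (1 + f u i) * Real.log (1 + f u i))
        ((Real.log (1 + f t i) + 1) * (Q (f t) i / ρ i)) t :=
        hx1.comp (h₂ := fun x : ℝ => (1 + x) * Real.log (1 + x)) (h := fun s => f s i) t hd
    have d2 : HasDerivAt (fun u => f u i * Real.log (f u i))
        ((Real.log (f t i) + 1) * (Q (f t) i / ρ i)) t :=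
        hx2.comp (h₂ := fun x : ℝ => x * Real.log x) (h := fun s => f s i) t hd
    have d := (d1.fun_sub d2).const_mul (ρ i)
    refine d.congr_deriv ?_
    have hρne : ρ i ≠ 0 := ne_of_gt (hρpos i hi)
    field_simp
    ring
  -- derivative of the entropy
  have hS : ∀ t : ℝ, HasDerivAt (fun u => w * ∑ i ∈ Icc 1 N,
      ρ i * ((1 + f u i) * Real.log (1 + f u i) - f u i * Real.log (f u i)))
      (w * ∑ i ∈ Icc 1 N, (Real.log (1 + f t i) - Real.log (f t i)) * Q (f t) i) t := by
    intro t
    exact (HasDerivAt.fun_sum (fun i hi => hterm t i hi)).const_mul w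
  -- the derivative is nonnegative
  have hD : ∀ t : ℝ, 0 ≤ w * ∑ i ∈ Icc 1 N,
      (Real.log (1 + f t i) - Real.log (f t i)) * Q (f t) i := by
    intro t
    apply mul_nonneg hw.le
    have hk := key_ineq N ρ hρ (f t) (hfpos t)
    have heq : ∑ i ∈ Icc 1 N, (Real.log (1 + f t i) - Real.log (f t i)) * Q (f t) i
        = w ^ 2 * ∑ i ∈ Icc 1 N, (Real.log (1 + f t i) - Real.log (f t i)) *
          (∑ j ∈ Icc 1 N, ∑ l ∈ Icc 1 N, ∑ k ∈ Icc 1 N,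
            if i + j = k + l then
              ρ (min (min i j) (min k l)) *
                (f t k * f t l * (1 + f t i) * (1 + f t j) -
                  f t i * f t j * (1 + f t k) * (1 + f t l))
            else 0) := by
      rw [Finset.mul_sum]
      apply Finset.sum_congr rfl
      intro i _
      rw [hQ (f t) i]
      ring
    rw [heq]
    exact mul_nonneg (sq_nonneg w) hk
  exact monotone_of_deriv_nonneg (fun t => (hS t).differentiableAt)
    (fun t => by rw [(hS t).deriv]; exact hD t)
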